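/- Let V be a real normed vector space, p ≥ 2 an integer, 0 < h ≤ 1, and C₂, C₄, C_x, C_β, C₉ ≥ 0 and C₃ > 0. Let x_{i−1}, x̃_{i−1} ∈ V with ‖x̃_{i−1} − x_{i−1}‖ ≤ C_x·h^p; let g_1, …, g_{p−1}, β̂_1, …, β̂_{p−1} ∈ V with ‖β̂_m − g_m‖ ≤ C_β·h^(p−1) for 2 ≤ m ≤ p−1; and let A, B_1, …, B_{p−1} ∈ ℝ with |A| ≤ C₂, |B_m| ≤ C₄·h for 2 ≤ m ≤ p−1, and |B_1| ≥ C₃·h. Define x̃_i = A·x̃_{i−1} + Σ_{m=1}^{p−1} B_m·β̂_m and x̄ = A·x_{i−1} + Σ_{m=1}^{p−1} B_m·g_m, and assume ‖x̃_i − x̄‖ ≤ C₉·h^p. Then ‖β̂_1 − g_1‖ ≤ ((C₉ + C₂·C_x + (p−2)·C₄·C_β)/C₃)·h^(p−1). -/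

import Mathlib

/-- Extracting a bound on the error of the newest compensated output `β̂₁` from a
bound on the discrepancy of the resulting multistep-predictor iterates. -/
theorem compensated_output_error_bound {V : Type*} [NormedAddCommGroup V] [NormedSpace ℝ V]
    (p : ℕ) (hp : 2 ≤ p) (h : ℝ) (hh0 : 0 < h) (hh1 : h ≤ 1)
    (C₂ C₄ Cx Cβ C₉ C₃ : ℝ)
    (hC₂ : 0 ≤ C₂) (hC₄ : 0 ≤ C₄) (hCx : 0 ≤ Cx) (hCβ : 0 ≤ Cβ) (hC₉ : 0 ≤ C₉)
    (hC₃ : 0 < C₃)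
    (x1 xt1 : V) (hx : ‖xt1 - x1‖ ≤ Cx * h ^ p)
    (g βhat : ℕ → V)
    (hβ : ∀ m, 2 ≤ m → m ≤ p - 1 → ‖βhat m - g m‖ ≤ Cβ * h ^ (p - 1))
    (A : ℝ) (B : ℕ → ℝ)
    (hA : |A| ≤ C₂)
    (hB : ∀ m, 2 ≤ m → m ≤ p - 1 → |B m| ≤ C₄ * h)
    (hB1 : C₃ * h ≤ |B 1|)
    (xti xbar : V)
    (hxti : xti = A • xt1 + ∑ m ∈ Finset.Icc 1 (p - 1), B m • βhat m)
    (hxbar : xbar = A • x1 + ∑ m ∈ Finset.Icc 1 (p - 1), B m • g m)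
    (hclose : ‖xti - xbar‖ ≤ C₉ * h ^ p) :
    ‖βhat 1 - g 1‖ ≤ ((C₉ + C₂ * Cx + ((p : ℝ) - 2) * C₄ * Cβ) / C₃) * h ^ (p - 1) := by
  have hpe : p - 1 + 1 = p := by omega
  have hp1 : 1 ≤ p - 1 := by omega
  have h1mem : (1 : ℕ) ∈ Finset.Icc 1 (p - 1) := Finset.mem_Icc.2 ⟨le_refl 1, hp1⟩
  have herase : (Finset.Icc 1 (p - 1)).erase 1 = Finset.Icc 2 (p - 1) := by
    rw [Finset.Icc_erase_left]
    exact (Finset.Icc_add_one_left_eq_Ioc ..).symm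
  have hdiff : xti - xbar
      = A • (xt1 - x1) + ∑ m ∈ Finset.Icc 1 (p - 1), B m • (βhat m - g m) := by
    subst hxti hxbar
    simp only [smul_sub, Finset.sum_sub_distrib]
    abel
  have hsplit : ∑ m ∈ Finset.Icc 1 (p - 1), B m • (βhat m - g m)
      = B 1 • (βhat 1 - g 1) + ∑ m ∈ Finset.Icc 2 (p - 1), B m • (βhat m - g m) := by
    rw [← Finset.add_sum_erase _ _ h1mem, herase]
  have key : B 1 • (βhat 1 - g 1)
      = (xti - xbar) - A • (xt1 - x1) - ∑ m ∈ Finset.Icc 2 (p - 1), B m • (βhat m - g m) := by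
    rw [hdiff, hsplit]; abel
  have hcard : ((Finset.Icc 2 (p - 1)).card : ℝ) = (p : ℝ) - 2 := by
    rw [Nat.card_Icc]
    have : p - 1 + 1 - 2 = p - 2 := by omega
    rw [this]
    push_cast [Nat.cast_sub hp]
    ring
  have hhp : h ^ p = h ^ (p - 1) * h := by
    conv_lhs => rw [← hpe, pow_succ]
  have hsum_bound : ‖∑ m ∈ Finset.Icc 2 (p - 1), B m • (βhat m - g m)‖
      ≤ ((p : ℝ) - 2) * C₄ * Cβ * h ^ p := by
    calc ‖∑ m ∈ Finset.Icc 2 (p - 1), B m • (βhat m - g m)‖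
        ≤ ∑ m ∈ Finset.Icc 2 (p - 1), ‖B m • (βhat m - g m)‖ := norm_sum_le _ _
      _ ≤ ∑ _m ∈ Finset.Icc 2 (p - 1), C₄ * h * (Cβ * h ^ (p - 1)) := by
          refine Finset.sum_le_sum fun m hm => ?_
          obtain ⟨hm2, hmp⟩ := Finset.mem_Icc.1 hm
          rw [norm_smul, Real.norm_eq_abs]
          exact mul_le_mul (hB m hm2 hmp) (hβ m hm2 hmp) (norm_nonneg _)
            (by positivity)
      _ = ((Finset.Icc 2 (p - 1)).card : ℝ) * (C₄ * h * (Cβ * h ^ (p - 1))) := by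
          rw [Finset.sum_const, nsmul_eq_mul]
      _ = ((p : ℝ) - 2) * C₄ * Cβ * h ^ p := by rw [hcard, hhp]; ring
  have hxbound : ‖A • (xt1 - x1)‖ ≤ C₂ * Cx * h ^ p := by
    rw [norm_smul, Real.norm_eq_abs]
    calc |A| * ‖xt1 - x1‖ ≤ C₂ * (Cx * h ^ p) :=
          mul_le_mul hA hx (norm_nonneg _) hC₂
      _ = C₂ * Cx * h ^ p := by ring
  have hmain : C₃ * h * ‖βhat 1 - g 1‖
      ≤ (C₉ + C₂ * Cx + ((p : ℝ) - 2) * C₄ * Cβ) * h ^ p := by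
    calc C₃ * h * ‖βhat 1 - g 1‖ ≤ |B 1| * ‖βhat 1 - g 1‖ :=
          mul_le_mul_of_nonneg_right hB1 (norm_nonneg _)
      _ = ‖B 1 • (βhat 1 - g 1)‖ := by rw [norm_smul, Real.norm_eq_abs]
      _ ≤ ‖xti - xbar‖ + ‖A • (xt1 - x1)‖
          + ‖∑ m ∈ Finset.Icc 2 (p - 1), B m • (βhat m - g m)‖ := by
          rw [key]
          exact (norm_sub_le _ _).trans (add_le_add_left (norm_sub_le _ _) _)
      _ ≤ C₉ * h ^ p + C₂ * Cx * h ^ p + ((p : ℝ) - 2) * C₄ * Cβ * h ^ p := by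
          gcongr
      _ = (C₉ + C₂ * Cx + ((p : ℝ) - 2) * C₄ * Cβ) * h ^ p := by ring
  have hCh : 0 < C₃ * h := mul_pos hC₃ hh0
  rw [← mul_le_mul_iff_right₀ hCh]
  calc C₃ * h * ‖βhat 1 - g 1‖
      ≤ (C₉ + C₂ * Cx + ((p : ℝ) - 2) * C₄ * Cβ) * h ^ p := hmain
    _ = C₃ * h * (((C₉ + C₂ * Cx + ((p : ℝ) - 2) * C₄ * Cβ) / C₃) * h ^ (p - 1)) := by
        rw [hhp]; field_simp
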